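/- Double-well drift estimate: let a > 0, ε > 0, and let H : ℝ → ℝ be given by H(x) = (1/2)(x² − a²)², so that H'(x) = 2x(x² − a²) and H''(x) = 6x² − 2a². Then for every x ∈ ℝ with x > 0 and (x − a)² ≥ 3ε/a², one has (1/(2ε))·H''(x) − (1/(4ε²))·(H'(x))² ≤ −a²/ε; and symmetrically, for every x < 0 with (x + a)² ≥ 3ε/a², one has (1/(2ε))·H''(x) − (1/(4ε²))·(H'(x))² ≤ −a²/ε. -/

import Mathlib

lemma dw_core (a ε x : ℝ) (hε : 0 < ε)
    (hk : 3 * ε * x ^ 2 ≤ x ^ 2 * (x ^ 2 - a ^ 2) ^ 2) :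
    (1 / (2 * ε)) * (6 * x ^ 2 - 2 * a ^ 2) -
      (1 / (4 * ε ^ 2)) * (2 * x * (x ^ 2 - a ^ 2)) ^ 2 ≤ -a ^ 2 / ε := by
  rw [← sub_nonneg]
  have h : -a ^ 2 / ε - ((1 / (2 * ε)) * (6 * x ^ 2 - 2 * a ^ 2) -
      (1 / (4 * ε ^ 2)) * (2 * x * (x ^ 2 - a ^ 2)) ^ 2)
      = (x ^ 2 * (x ^ 2 - a ^ 2) ^ 2 - 3 * ε * x ^ 2) / ε ^ 2 := by
    field_simp
    ring
  rw [h]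
  apply div_nonneg (by linarith) (by positivity)

/-- double-well drift estimate (from Lemma 3.4 of the paper): for the
double-well potential `H(x) = (1/2)(x² − a²)²`, whose derivatives are
`H'(x) = 2x(x² − a²)` and `H''(x) = 6x² − 2a²`, one has
`(1/(2ε))H''(x) − (1/(4ε²))(H'(x))² ≤ −a²/ε` whenever `x > 0` and
`(x−a)² ≥ 3ε/a²`, and symmetrically for `x < 0` with `(x+a)² ≥ 3ε/a²`. -/
theorem double_well_drift (a ε : ℝ) (ha : 0 < a) (hε : 0 < ε)
    (H : ℝ → ℝ) (hH : ∀ x, H x = (1 / 2) * (x ^ 2 - a ^ 2) ^ 2) :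
    (∀ x : ℝ, deriv H x = 2 * x * (x ^ 2 - a ^ 2) ∧ deriv (deriv H) x = 6 * x ^ 2 - 2 * a ^ 2) ∧
    (∀ x : ℝ, 0 < x → 3 * ε / a ^ 2 ≤ (x - a) ^ 2 →
      (1 / (2 * ε)) * deriv (deriv H) x - (1 / (4 * ε ^ 2)) * (deriv H x) ^ 2 ≤ -a ^ 2 / ε) ∧
    (∀ x : ℝ, x < 0 → 3 * ε / a ^ 2 ≤ (x + a) ^ 2 →
      (1 / (2 * ε)) * deriv (deriv H) x - (1 / (4 * ε ^ 2)) * (deriv H x) ^ 2 ≤ -a ^ 2 / ε) := by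
  have hHfun : H = fun x => (1 / 2) * (x ^ 2 - a ^ 2) ^ 2 := funext hH
  have hd1 : ∀ x : ℝ, HasDerivAt H (2 * x * (x ^ 2 - a ^ 2)) x := by
    intro x
    rw [hHfun]
    have h := (((hasDerivAt_pow 2 x).sub_const (a ^ 2)).pow 2).const_mul (1 / 2 : ℝ)
    refine h.congr_deriv ?_
    ring
  have hD1 : deriv H = fun x => 2 * x * (x ^ 2 - a ^ 2) := funext fun x => (hd1 x).deriv
  have hd2 : ∀ x : ℝ, HasDerivAt (deriv H) (6 * x ^ 2 - 2 * a ^ 2) x := by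
    intro x
    rw [hD1]
    have h := ((hasDerivAt_id' x).const_mul (2 : ℝ)).mul ((hasDerivAt_pow 2 x).sub_const (a ^ 2))
    refine h.congr_deriv ?_
    ring
  have hD2 : ∀ x : ℝ, deriv (deriv H) x = 6 * x ^ 2 - 2 * a ^ 2 := fun x => (hd2 x).deriv
  refine ⟨fun x => ⟨by rw [hD1], hD2 x⟩, ?_, ?_⟩
  · intro x hx hsq
    rw [hD2 x, hD1]
    apply dw_core a ε x hε
    have h2 : 3 * ε ≤ (x - a) ^ 2 * a ^ 2 := (div_le_iff₀ (by positivity)).mp hsq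
    have h1 : a ^ 2 ≤ (x + a) ^ 2 := by nlinarith
    nlinarith [sq_nonneg x, sq_nonneg (x - a), mul_nonneg (sq_nonneg x) (sq_nonneg (x - a)),
      mul_le_mul_of_nonneg_left h1 (mul_nonneg (sq_nonneg x) (sq_nonneg (x - a))),
      mul_le_mul_of_nonneg_left h2 (sq_nonneg x)]
  · intro x hx hsq
    rw [hD2 x, hD1]
    apply dw_core a ε x hε
    have h2 : 3 * ε ≤ (x + a) ^ 2 * a ^ 2 := (div_le_iff₀ (by positivity)).mp hsq
    have h1 : a ^ 2 ≤ (x - a) ^ 2 := by nlinarith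
    nlinarith [sq_nonneg x, sq_nonneg (x + a), mul_nonneg (sq_nonneg x) (sq_nonneg (x + a)),
      mul_le_mul_of_nonneg_left h1 (mul_nonneg (sq_nonneg x) (sq_nonneg (x + a))),
      mul_le_mul_of_nonneg_left h2 (sq_nonneg x)]
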